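/- Let R be a finite region in the lattice ℤ² that is the set of lattice points weakly between two fixed monotone NE lattice paths from (0,0) to (a,b) (a row- and column-convex staircase region). Let A = (a₁,a₂) and B = (b₁,b₂) be lattice points in R on the same vertical line (a₁ = b₁) with A above B (a₂ ≥ b₂), and let C = (c₁,c₂), D = (d₁,d₂) be lattice points in R on a common vertical line strictly to the right (c₁ = d₁ > a₁) with C above D. Write K(X,Y) for the number of monotone NE lattice paths from X to Y staying inside R. If a₂ - b₂ > c₂ - d₂, then K(A - e₂, C) · K(B + e₂, D) ≥ K(A, C) · K(B, D), where e₂ = (0,1). -/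

import Mathlib

set_option maxHeartbeats 1000000


/-- Number of lattice steps of a monotone NE path from `A` to `B`. -/
def steps (A B : ℤ × ℤ) : ℕ := ((B.1 - A.1) + (B.2 - A.2)).toNat

/-- `p : ℕ → ℤ × ℤ` is a monotone NE lattice path from `A` to `B`:
it starts at `A`, takes unit East or North steps, and is constantly `B` after
`steps A B` steps. -/
def IsNEPath (A B : ℤ × ℤ) (p : ℕ → ℤ × ℤ) : Prop :=
  p 0 = A ∧
  (∀ t, t < steps A B → p (t + 1) = p t + (1, 0) ∨ p (t + 1) = p t + (0, 1)) ∧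
  (∀ t, steps A B ≤ t → p t = B)

/-- The set of lattice points weakly between the two NE lattice paths
`lower` and `upper` (each with `n` steps): a point is in the region iff it lies
weakly above some point of `lower` in its column and weakly below some point of
`upper` in its column. -/
def staircaseRegion (n : ℕ) (lower upper : ℕ → ℤ × ℤ) : Set (ℤ × ℤ) :=
  {v | (∃ t ≤ n, (lower t).1 = v.1 ∧ (lower t).2 ≤ v.2) ∧
       (∃ t ≤ n, (upper t).1 = v.1 ∧ v.2 ≤ (upper t).2)}

/-- The number of monotone NE lattice paths from `A` to `B` staying inside `R`. -/
noncomputable def pathCount (R : Set (ℤ × ℤ)) (A B : ℤ × ℤ) : ℕ :=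
  Nat.card {p : ℕ → ℤ × ℤ // IsNEPath A B p ∧ ∀ t, p t ∈ R}


section PathLemmas

variable {P Q : ℤ × ℤ} {p : ℕ → ℤ × ℤ}

lemma path_fst_mono (hp : IsNEPath P Q p) : Monotone fun t => (p t).1 := by
  apply monotone_nat_of_le_succ
  intro t
  rcases lt_or_ge t (steps P Q) with h | h
  · rcases hp.2.1 t h with h' | h' <;> rw [h'] <;> simp [Prod.fst_add]
  · rw [hp.2.2 t h, hp.2.2 (t+1) (by omega)]

lemma path_snd_mono (hp : IsNEPath P Q p) : Monotone fun t => (p t).2 := by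
  apply monotone_nat_of_le_succ
  intro t
  rcases lt_or_ge t (steps P Q) with h | h
  · rcases hp.2.1 t h with h' | h' <;> rw [h'] <;> simp [Prod.snd_add]
  · rw [hp.2.2 t h, hp.2.2 (t+1) (by omega)]

lemma path_sum (hp : IsNEPath P Q p) :
    ∀ t, t ≤ steps P Q → (p t).1 + (p t).2 = P.1 + P.2 + t := by
  intro t
  induction t with
  | zero => intro _; rw [hp.1]; simp
  | succ t ih =>
    intro h
    have h1 := ih (by omega)
    rcases hp.2.1 t (by omega) with h' | h' <;> rw [h'] <;>
      simp [Prod.fst_add, Prod.snd_add] <;> push_cast <;> omega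

lemma path_fst_le (hp : IsNEPath P Q p) (t : ℕ) : (p t).1 ≤ Q.1 := by
  rcases le_total t (steps P Q) with h | h
  · have := path_fst_mono hp h
    simpa [hp.2.2 (steps P Q) le_rfl] using this
  · rw [hp.2.2 t h]

lemma path_snd_le (hp : IsNEPath P Q p) (t : ℕ) : (p t).2 ≤ Q.2 := by
  rcases le_total t (steps P Q) with h | h
  · have := path_snd_mono hp h
    simpa [hp.2.2 (steps P Q) le_rfl] using this
  · rw [hp.2.2 t h]

lemma path_fst_ge (hp : IsNEPath P Q p) (t : ℕ) : P.1 ≤ (p t).1 := by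
  have := path_fst_mono hp (Nat.zero_le t)
  simpa [hp.1] using this

lemma path_snd_ge (hp : IsNEPath P Q p) (t : ℕ) : P.2 ≤ (p t).2 := by
  have := path_snd_mono hp (Nat.zero_le t)
  simpa [hp.1] using this

lemma steps_eq {m : ℕ} (hQ1 : Q.1 = P.1 + m) (hle : P.2 ≤ Q.2) :
    (steps P Q : ℤ) = m + Q.2 - P.2 := by
  simp only [steps, hQ1]
  omega

end PathLemmas

section Jcount

/-- downward-closed finsets of `Fin m` are initial segments -/
lemma mem_iff_lt_card {m : ℕ} {s : Finset (Fin m)}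
    (hdc : ∀ i j : Fin m, i ≤ j → j ∈ s → i ∈ s) (i : Fin m) :
    i ∈ s ↔ (i : ℕ) < s.card := by
  constructor
  · intro hi
    have h1 : Finset.Iic i ⊆ s := fun j hj => hdc j i (Finset.mem_Iic.mp hj) hi
    have := Finset.card_le_card h1
    rw [Fin.card_Iic] at this
    omega
  · intro hi
    by_contra hns
    have h1 : s ⊆ Finset.Iio i := by
      intro j hj
      rcases le_or_gt i j with h | h
      · exact absurd (hdc i j h hj) hns
      · exact Finset.mem_Iio.mpr h
    have := Finset.card_le_card h1
    rw [Fin.card_Iio] at this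
    omega

variable (α : ℤ) (m : ℕ) (y : Fin m → ℤ)

def jcount (t : ℕ) : ℕ :=
  (Finset.univ.filter (fun i : Fin m => (i : ℤ) + y i - α < (t : ℤ))).card

variable {α m y}

lemma jcount_mem_iff (hmono : Monotone y) (t : ℕ) (i : Fin m) :
    (i : ℤ) + y i - α < (t : ℤ) ↔ (i : ℕ) < jcount α m y t := by
  have h := mem_iff_lt_card (s := Finset.univ.filter (fun i : Fin m => (i : ℤ) + y i - α < (t : ℤ)))
    (fun i j hij hj => by
      simp only [Finset.mem_filter, Finset.mem_univ, true_and] at *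
      have h1 : (i : ℤ) ≤ (j : ℤ) := by exact_mod_cast hij
      have h2 := hmono hij
      omega) i
  simpa [jcount, Finset.mem_filter] using h

lemma jcount_le (t : ℕ) : jcount α m y t ≤ m := by
  simpa [jcount] using Finset.card_le_card (Finset.filter_subset _ (Finset.univ : Finset (Fin m)))

lemma jcount_zero (hlb : ∀ i, α ≤ y i) : jcount α m y 0 = 0 := by
  simp only [jcount, Finset.card_eq_zero]
  apply Finset.filter_false_of_mem
  intro i _
  have := hlb i
  have : (0:ℤ) ≤ (i:ℤ) := by positivity
  omega

lemma jcount_step (hmono : Monotone y) (t : ℕ) :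
    jcount α m y (t+1) = jcount α m y t ∨ jcount α m y (t+1) = jcount α m y t + 1 := by
  have hmonot : jcount α m y t ≤ jcount α m y (t+1) := by
    apply Finset.card_le_card
    intro i hi
    simp only [Finset.mem_filter, Finset.mem_univ, true_and] at *
    push_cast
    omega
  rcases Nat.lt_or_ge (jcount α m y (t+1)) (jcount α m y t + 2) with h | h
  · omega
  · exfalso
    have hm1 : jcount α m y t < m := lt_of_lt_of_le (by omega) (jcount_le (α := α) (y := y) (t+1))
    have hm2 : jcount α m y t + 1 < m := lt_of_lt_of_le (by omega) (jcount_le (α := α) (y := y) (t+1))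
    set c := jcount α m y t with hc
    have e1 : ((⟨c, hm1⟩ : Fin m) : ℕ) < jcount α m y (t+1) := by
      simp only [Fin.val_mk]; omega
    have e2 : ((⟨c+1, hm2⟩ : Fin m) : ℕ) < jcount α m y (t+1) := by
      simp only [Fin.val_mk]; omega
    have i1 := (jcount_mem_iff (α := α) hmono (t+1) ⟨c, hm1⟩).mpr e1
    have i2 := (jcount_mem_iff (α := α) hmono (t+1) ⟨c+1, hm2⟩).mpr e2
    have i3 : ¬ (((⟨c, hm1⟩ : Fin m) : ℤ) + y ⟨c, hm1⟩ - α < (t : ℤ)) := by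
      intro hcon
      have := (jcount_mem_iff hmono t _).mp hcon
      simp at this
      omega
    have i4 : y ⟨c, hm1⟩ ≤ y ⟨c+1, hm2⟩ := hmono (by simp [Fin.le_def])
    simp only [Fin.val_mk] at i1 i2 i3
    push_cast at i1 i2 i3
    omega

lemma jcount_top (t : ℕ) (hub : ∀ i : Fin m, (i : ℤ) + y i - α < (t : ℤ)) : jcount α m y t = m := by
  simp only [jcount]
  rw [Finset.filter_true_of_mem (fun i _ => hub i)]
  simp

end Jcount


section Enc

def EncSet (R : Set (ℤ × ℤ)) (m : ℕ) (x₀ α γ : ℤ) : Set (Fin m → ℤ) :=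
  {y | Monotone y ∧ (∀ i, α ≤ y i ∧ y i ≤ γ) ∧
       ∀ i : Fin m, (x₀ + (i : ℕ), y i) ∈ R ∧ (x₀ + (i : ℕ) + 1, y i) ∈ R}

noncomputable def decPath (P Q : ℤ × ℤ) (m : ℕ) (y : Fin m → ℤ) : ℕ → ℤ × ℤ :=
  fun t => if steps P Q ≤ t then Q
           else (P.1 + (jcount P.2 m y t : ℤ), P.2 + (t : ℤ) - (jcount P.2 m y t : ℤ))

variable {R : Set (ℤ × ℤ)} {P Q : ℤ × ℤ} {m : ℕ} {y : Fin m → ℤ}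

lemma decPath_eq (hm : 0 < m) (hQ1 : Q.1 = P.1 + m) (hle : P.2 ≤ Q.2)
    (hmono : Monotone y) (hbd : ∀ i, P.2 ≤ y i ∧ y i ≤ Q.2) :
    ∀ t, t ≤ steps P Q → decPath P Q m y t =
      (P.1 + (jcount P.2 m y t : ℤ), P.2 + (t : ℤ) - (jcount P.2 m y t : ℤ)) := by
  have hn : (steps P Q : ℤ) = m + Q.2 - P.2 := steps_eq hQ1 hle
  intro t ht
  by_cases h : steps P Q ≤ t
  · have hteq : t = steps P Q := le_antisymm ht h
    have hj : jcount P.2 m y t = m := by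
      apply jcount_top
      intro i
      have h1 := (hbd i).2
      have h2 : (i : ℕ) < m := i.2
      have h3 : ((i : ℕ) : ℤ) < m := by exact_mod_cast h2
      omega
    simp only [decPath, if_pos h, hj]
    have : Q = (P.1 + (m : ℤ), P.2 + (t : ℤ) - m) := by
      rw [Prod.ext_iff]
      constructor
      · exact hQ1
      · simp only []
        omega
    rw [← this]
  · simp only [decPath, if_neg h]

lemma decPath_isNEPath (hm : 0 < m) (hQ1 : Q.1 = P.1 + m) (hle : P.2 ≤ Q.2)
    (hmono : Monotone y) (hbd : ∀ i, P.2 ≤ y i ∧ y i ≤ Q.2) :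
    IsNEPath P Q (decPath P Q m y) := by
  have hn : (steps P Q : ℤ) = m + Q.2 - P.2 := steps_eq hQ1 hle
  have hnpos : 0 < steps P Q := by omega
  have hform := decPath_eq hm hQ1 hle hmono hbd
  refine ⟨?_, ?_, ?_⟩
  · rw [hform 0 (by omega), jcount_zero (fun i => (hbd i).1)]
    rw [Prod.ext_iff]
    constructor <;> simp
  · intro t ht
    rw [hform t (by omega), hform (t+1) (by omega)]
    rcases jcount_step (α := P.2) hmono t with h | h <;> rw [h]
    · right
      rw [Prod.ext_iff, Prod.fst_add, Prod.snd_add]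
      constructor <;> simp <;> push_cast <;> ring
    · left
      rw [Prod.ext_iff, Prod.fst_add, Prod.snd_add]
      constructor <;> simp <;> push_cast <;> ring
  · intro t ht
    simp only [decPath, if_pos ht]

lemma decPath_memR (hconv : ∀ x r s t : ℤ, (x, r) ∈ R → (x, t) ∈ R → r ≤ s → s ≤ t → (x, s) ∈ R)
    (hP : P ∈ R) (hQ : Q ∈ R) (hm : 0 < m) (hQ1 : Q.1 = P.1 + m) (hle : P.2 ≤ Q.2)
    (hy : y ∈ EncSet R m P.1 P.2 Q.2) :
    ∀ t, decPath P Q m y t ∈ R := by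
  obtain ⟨hmono, hbd, hyR⟩ := hy
  have hn : (steps P Q : ℤ) = m + Q.2 - P.2 := steps_eq hQ1 hle
  have hform := decPath_eq hm hQ1 hle hmono hbd
  intro t
  by_cases h : steps P Q ≤ t
  · simp only [decPath, if_pos h]; exact hQ
  · push_neg at h
    rw [hform t (le_of_lt h)]
    have hjle : jcount P.2 m y t ≤ m := jcount_le (α := P.2) (y := y) t
    have hjget := jcount_mem_iff (α := P.2) hmono t
    set j := jcount P.2 m y t with hjdef
    rcases Nat.eq_zero_or_pos j with h0 | hpos
    · have hub : ¬(((⟨0, hm⟩ : Fin m) : ℤ) + y ⟨0, hm⟩ - P.2 < (t : ℤ)) := by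
        rw [hjget]
        simp [h0]
      simp only [Fin.val_mk] at hub
      push_cast at hub
      refine hconv _ P.2 _ (y ⟨0, hm⟩) ?_ ?_ ?_ ?_
      · rw [h0]; push_cast; simpa using hP
      · rw [h0]
        have := (hyR ⟨0, hm⟩).1
        simp only [Fin.val_mk] at this
        push_cast
        simpa using this
      · rw [h0]; push_cast; omega
      · rw [h0]; push_cast; omega
    · rcases Nat.lt_or_ge j m with hjm | hjm
      · have hl : ((⟨j-1, by omega⟩ : Fin m) : ℤ) + y ⟨j-1, by omega⟩ - P.2 < (t : ℤ) := by
          rw [hjget]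
          simp only [Fin.val_mk]
          omega
        have hu : ¬(((⟨j, hjm⟩ : Fin m) : ℤ) + y ⟨j, hjm⟩ - P.2 < (t : ℤ)) := by
          rw [hjget]
          simp
        simp only [Fin.val_mk] at hl hu
        refine hconv _ (y ⟨j-1, by omega⟩) _ (y ⟨j, hjm⟩) ?_ ?_ ?_ ?_
        · have h2 := (hyR ⟨j-1, by omega⟩).2
          simp only [Fin.val_mk] at h2
          have he : P.1 + ((j-1 : ℕ) : ℤ) + 1 = P.1 + (j : ℤ) := by omega
          rwa [he] at h2
        · have h2 := (hyR ⟨j, hjm⟩).1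
          simp only [Fin.val_mk] at h2
          exact h2
        · have hc : ((j - 1 : ℕ) : ℤ) = (j : ℤ) - 1 := by omega
          omega
        · omega
      · have hjm' : j = m := le_antisymm hjle hjm
        have hl : ((⟨j-1, by omega⟩ : Fin m) : ℤ) + y ⟨j-1, by omega⟩ - P.2 < (t : ℤ) := by
          rw [hjget]
          simp only [Fin.val_mk]
          omega
        simp only [Fin.val_mk] at hl
        refine hconv _ (y ⟨j-1, by omega⟩) _ Q.2 ?_ ?_ ?_ ?_
        · have h2 := (hyR ⟨j-1, by omega⟩).2
          simp only [Fin.val_mk] at h2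
          have he : P.1 + ((j-1 : ℕ) : ℤ) + 1 = P.1 + (j : ℤ) := by omega
          rwa [he] at h2
        · have he : (P.1 + (j : ℤ), Q.2) = Q := by
            rw [Prod.ext_iff]
            constructor
            · simp only []
              rw [hQ1, hjm']
            · rfl
          rw [he]
          exact hQ
        · have hc : ((j - 1 : ℕ) : ℤ) = (j : ℤ) - 1 := by omega
          omega
        · have : (t : ℤ) < (steps P Q : ℤ) := by exact_mod_cast h
          omega

end Enc

section EncOf

variable {R : Set (ℤ × ℤ)} {P Q : ℤ × ℤ} {m : ℕ} {p : ℕ → ℤ × ℤ}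

lemma hexOf (hp : IsNEPath P Q p) (hQ1 : Q.1 = P.1 + m) :
    ∀ i : Fin m, ∃ t, P.1 + (i : ℕ) + 1 ≤ (p t).1 := by
  intro i
  refine ⟨steps P Q, ?_⟩
  rw [hp.2.2 _ le_rfl, hQ1]
  have h2 : ((i : ℕ) : ℤ) < m := by exact_mod_cast i.2
  omega

noncomputable def encOf (P : ℤ × ℤ) (m : ℕ) (p : ℕ → ℤ × ℤ)
    (hex : ∀ i : Fin m, ∃ t, P.1 + (i : ℕ) + 1 ≤ (p t).1) : Fin m → ℤ :=
  fun i => (p (Nat.find (hex i))).2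

lemma encOf_spec (hp : IsNEPath P Q p) (hQ1 : Q.1 = P.1 + m)
    (hex : ∀ i : Fin m, ∃ t, P.1 + (i : ℕ) + 1 ≤ (p t).1) (i : Fin m) :
    0 < Nat.find (hex i) ∧ Nat.find (hex i) ≤ steps P Q ∧
    (p (Nat.find (hex i))).1 = P.1 + (i : ℕ) + 1 ∧
    (p (Nat.find (hex i) - 1)).1 = P.1 + (i : ℕ) ∧
    (p (Nat.find (hex i))).2 = (p (Nat.find (hex i) - 1)).2 := by
  have h1 : Nat.find (hex i) ≤ steps P Q := by
    apply Nat.find_le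
    rw [hp.2.2 _ le_rfl, hQ1]
    have h2 : ((i : ℕ) : ℤ) < m := by exact_mod_cast i.2
    omega
  have h2 : 0 < Nat.find (hex i) := by
    apply Nat.pos_of_ne_zero
    intro h
    have hs := Nat.find_spec (hex i)
    rw [h, hp.1] at hs
    have : (0 : ℤ) ≤ ((i : ℕ) : ℤ) := by positivity
    omega
  have h3 : ¬ (P.1 + (i : ℕ) + 1 ≤ (p (Nat.find (hex i) - 1)).1) :=
    Nat.find_min (hex i) (by omega)
  have h4 := hp.2.1 (Nat.find (hex i) - 1) (by omega)
  have h5 : Nat.find (hex i) - 1 + 1 = Nat.find (hex i) := by omega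
  rw [h5] at h4
  have h6 := Nat.find_spec (hex i)
  rcases h4 with h' | h'
  · rw [h'] at h6 ⊢
    rw [Prod.fst_add, Prod.snd_add] at *
    simp only [] at *
    refine ⟨h2, h1, by omega, by omega, by omega⟩
  · exfalso
    rw [h', Prod.fst_add] at h6
    simp only [] at h6
    omega

lemma encOf_mem (hconv : ∀ x r s t : ℤ, (x, r) ∈ R → (x, t) ∈ R → r ≤ s → s ≤ t → (x, s) ∈ R)
    (hp : IsNEPath P Q p) (hpR : ∀ t, p t ∈ R) (hQ1 : Q.1 = P.1 + m)
    (hex : ∀ i : Fin m, ∃ t, P.1 + (i : ℕ) + 1 ≤ (p t).1) :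
    encOf P m p hex ∈ EncSet R m P.1 P.2 Q.2 := by
  refine ⟨?_, ?_, ?_⟩
  · intro i j hij
    have hf : Nat.find (hex i) ≤ Nat.find (hex j) := by
      apply Nat.find_mono
      intro t ht
      have : ((i : ℕ) : ℤ) ≤ ((j : ℕ) : ℤ) := by exact_mod_cast hij
      omega
    exact path_snd_mono hp hf
  · intro i
    constructor
    · exact path_snd_ge hp _
    · exact path_snd_le hp _
  · intro i
    obtain ⟨hpos, hlen, hfst, hfst', hsnd⟩ := encOf_spec hp hQ1 hex i
    constructor
    · have := hpR (Nat.find (hex i) - 1)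
      have he : p (Nat.find (hex i) - 1) = (P.1 + (i : ℕ), encOf P m p hex i) := by
        rw [Prod.ext_iff]
        exact ⟨hfst', hsnd.symm⟩
      rwa [he] at this
    · have := hpR (Nat.find (hex i))
      have he : p (Nat.find (hex i)) = (P.1 + (i : ℕ) + 1, encOf P m p hex i) := by
        rw [Prod.ext_iff]
        exact ⟨hfst, rfl⟩
      rwa [he] at this

end EncOf

section RoundTrips

variable {R : Set (ℤ × ℤ)} {P Q : ℤ × ℤ} {m : ℕ} {y : Fin m → ℤ} {p : ℕ → ℤ × ℤ}

lemma round1 (hm : 0 < m) (hQ1 : Q.1 = P.1 + m) (hle : P.2 ≤ Q.2)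
    (hy : y ∈ EncSet R m P.1 P.2 Q.2)
    (hex : ∀ i : Fin m, ∃ t, P.1 + (i : ℕ) + 1 ≤ (decPath P Q m y t).1) :
    encOf P m (decPath P Q m y) hex = y := by
  have hp := decPath_isNEPath hm hQ1 hle hy.1 hy.2.1
  have hform := decPath_eq hm hQ1 hle hy.1 hy.2.1
  funext i
  obtain ⟨hpos, hlen, hfst, hfst', hsnd⟩ := encOf_spec hp hQ1 hex i
  have ef : (jcount P.2 m y (Nat.find (hex i)) : ℤ) = (i : ℕ) + 1 := by
    rw [hform _ hlen] at hfst
    simp only [] at hfst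
    omega
  have ef' : (jcount P.2 m y (Nat.find (hex i) - 1) : ℤ) = (i : ℕ) := by
    rw [hform _ (by omega)] at hfst'
    simp only [] at hfst'
    omega
  have c1 : (i : ℤ) + y i - P.2 < ((Nat.find (hex i) : ℕ) : ℤ) := by
    apply (jcount_mem_iff (α := P.2) hy.1 (Nat.find (hex i)) i).mpr
    omega
  have c2 : ¬ ((i : ℤ) + y i - P.2 < ((Nat.find (hex i) - 1 : ℕ) : ℤ)) := by
    intro hcon
    have := (jcount_mem_iff (α := P.2) hy.1 (Nat.find (hex i) - 1) i).mp hcon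
    omega
  show (decPath P Q m y (Nat.find (hex i))).2 = y i
  rw [hform _ hlen]
  simp only []
  omega

lemma round2 (hconv : ∀ x r s t : ℤ, (x, r) ∈ R → (x, t) ∈ R → r ≤ s → s ≤ t → (x, s) ∈ R)
    (hp : IsNEPath P Q p) (hpR : ∀ t, p t ∈ R)
    (hm : 0 < m) (hQ1 : Q.1 = P.1 + m) (hle : P.2 ≤ Q.2) :
    decPath P Q m (encOf P m p (hexOf hp hQ1)) = p := by
  have hy := encOf_mem hconv hp hpR hQ1 (hexOf hp hQ1)
  funext t
  by_cases ht : steps P Q ≤ t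
  · simp only [decPath, if_pos ht]
    exact (hp.2.2 t ht).symm
  · push_neg at ht
    rw [decPath_eq hm hQ1 hle hy.1 hy.2.1 t (le_of_lt ht)]
    have hple : (p t).1 ≤ Q.1 := path_fst_le hp t
    have hpge : P.1 ≤ (p t).1 := path_fst_ge hp t
    have hc : (((p t).1 - P.1).toNat : ℤ) = (p t).1 - P.1 := Int.toNat_of_nonneg (by omega)
    have hcm : ((p t).1 - P.1).toNat ≤ m := by omega
    have hchar : ∀ i : Fin m, ((i : ℤ) + encOf P m p (hexOf hp hQ1) i - P.2 < (t : ℤ) ↔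
        (i : ℕ) < ((p t).1 - P.1).toNat) := by
      intro i
      obtain ⟨hpos, hlen, hfst, hfst', hsnd⟩ := encOf_spec hp hQ1 (hexOf hp hQ1) i
      have hsum := path_sum hp (Nat.find (hexOf hp hQ1 i) - 1) (by omega)
      have hy_val : encOf P m p (hexOf hp hQ1) i = (p (Nat.find (hexOf hp hQ1 i) - 1)).2 := hsnd
      have hTi : (i : ℤ) + encOf P m p (hexOf hp hQ1) i - P.2
          = ((Nat.find (hexOf hp hQ1 i) : ℕ) : ℤ) - 1 := by
        rw [hy_val]
        omega
      constructor
      · intro h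
        have hft : Nat.find (hexOf hp hQ1 i) ≤ t := by omega
        have h2 : (p (Nat.find (hexOf hp hQ1 i))).1 ≤ (p t).1 := path_fst_mono hp hft
        omega
      · intro h
        have hft : Nat.find (hexOf hp hQ1 i) ≤ t := Nat.find_le (by omega)
        omega
    have hjeq : jcount P.2 m (encOf P m p (hexOf hp hQ1)) t = ((p t).1 - P.1).toNat := by
      have hjle : jcount P.2 m (encOf P m p (hexOf hp hQ1)) t ≤ m :=
        jcount_le (α := P.2) (y := encOf P m p (hexOf hp hQ1)) t
      rcases Nat.lt_trichotomy (jcount P.2 m (encOf P m p (hexOf hp hQ1)) t)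
        (((p t).1 - P.1).toNat) with h | h | h
      · exfalso
        have hlt : jcount P.2 m (encOf P m p (hexOf hp hQ1)) t < m := lt_of_lt_of_le h hcm
        have h1 := (hchar ⟨_, hlt⟩).mpr (by simpa using h)
        have h2 := (jcount_mem_iff (α := P.2) hy.1 t ⟨_, hlt⟩).mp h1
        simp at h2
      · exact h
      · exfalso
        have hlt : ((p t).1 - P.1).toNat < m := lt_of_lt_of_le h hjle
        have h1 := (jcount_mem_iff (α := P.2) hy.1 t ⟨_, hlt⟩).mpr (by simpa using h)
        have h2 := (hchar ⟨_, hlt⟩).mp h1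
        simp at h2
    rw [hjeq]
    have hsum := path_sum hp t (le_of_lt ht)
    rw [Prod.ext_iff]
    constructor <;> simp only [] <;> omega

end RoundTrips

lemma count_eq (R : Set (ℤ × ℤ))
    (hconv : ∀ x r s t : ℤ, (x, r) ∈ R → (x, t) ∈ R → r ≤ s → s ≤ t → (x, s) ∈ R)
    (P Q : ℤ × ℤ) (hP : P ∈ R) (hQ : Q ∈ R) (m : ℕ) (hm : 0 < m)
    (hQ1 : Q.1 = P.1 + m) (hle : P.2 ≤ Q.2) :
    pathCount R P Q = Nat.card (EncSet R m P.1 P.2 Q.2) := by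
  apply Nat.card_congr
  exact
    { toFun := fun q => ⟨encOf P m q.1 (hexOf q.2.1 hQ1),
        encOf_mem hconv q.2.1 q.2.2 hQ1 _⟩
      invFun := fun z => ⟨decPath P Q m z.1,
        decPath_isNEPath hm hQ1 hle z.2.1 z.2.2.1,
        decPath_memR hconv hP hQ hm hQ1 hle z.2⟩
      left_inv := fun q => Subtype.ext (round2 hconv q.2.1 q.2.2 hm hQ1 hle)
      right_inv := fun z => Subtype.ext (round1 hm hQ1 hle z.2 _) }

lemma pathCount_eq_zero {R : Set (ℤ × ℤ)} {P Q : ℤ × ℤ} (h : Q.2 < P.2) :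
    pathCount R P Q = 0 := by
  rw [pathCount, Nat.card_eq_zero]
  left
  constructor
  rintro ⟨p, hp, -⟩
  have h2 : (p 0).2 ≤ (p (steps P Q)).2 := path_snd_mono hp (Nat.zero_le _)
  rw [hp.1, hp.2.2 _ le_rfl] at h2
  omega

open FinsetFamily in
lemma enc_ineq (R : Set (ℤ × ℤ))
    (hconv : ∀ x r s t : ℤ, (x, r) ∈ R → (x, t) ∈ R → r ≤ s → s ≤ t → (x, s) ∈ R)
    (m : ℕ) (x₀ α β γ δ : ℤ) (hk0 : 0 ≤ γ - δ) (hk : γ - δ ≤ α - β - 1) :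
    Nat.card (EncSet R m x₀ α γ) * Nat.card (EncSet R m x₀ β δ) ≤
      Nat.card (EncSet R m x₀ (α - 1) γ) * Nat.card (EncSet R m x₀ (β + 1) δ) := by
  classical
  have hfin : ∀ α' γ' : ℤ, (EncSet R m x₀ α' γ').Finite := by
    intro α' γ'
    apply Set.Finite.subset (Set.finite_Icc (fun _ : Fin m => α') (fun _ : Fin m => γ'))
    intro y hy
    rw [Set.mem_Icc]
    exact ⟨fun i => (hy.2.1 i).1, fun i => (hy.2.1 i).2⟩
  set k : ℤ := α - β - 1 with hkdef
  have hkpos : 0 ≤ k := by omega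
  set K : Fin m → ℤ := fun _ => k with hKdef
  set S := (hfin α γ).toFinset with hS
  set T := (hfin β δ).toFinset with hT
  set S' := (hfin (α-1) γ).toFinset with hS'
  set T' := (hfin (β+1) δ).toFinset with hT'
  set Tk := T.image (fun z => z + K) with hTk
  have hsub1 : S ⊼ Tk ⊆ S' := by
    intro u hu
    rw [Finset.mem_infs] at hu
    obtain ⟨y, hyS, w, hwTk, rfl⟩ := hu
    rw [hTk, Finset.mem_image] at hwTk
    obtain ⟨z, hzT, rfl⟩ := hwTk
    rw [hS, Set.Finite.mem_toFinset] at hyS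
    rw [hT, Set.Finite.mem_toFinset] at hzT
    rw [hS', Set.Finite.mem_toFinset]
    obtain ⟨hym, hyb, hyR⟩ := hyS
    obtain ⟨hzm, hzb, hzR⟩ := hzT
    refine ⟨?_, ?_, ?_⟩
    · intro i j hij
      simp only [Pi.inf_apply, Pi.add_apply, hKdef]
      apply le_inf
      · exact inf_le_left.trans (hym hij)
      · exact inf_le_right.trans (by exact add_le_add_left (hzm hij) k)
    · intro i
      simp only [Pi.inf_apply, Pi.add_apply, hKdef, le_inf_iff, inf_le_iff]
      have h1 := (hyb i).1
      have h2 := (hyb i).2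
      have h3 := (hzb i).1
      have h4 := (hzb i).2
      constructor
      · constructor <;> omega
      · left; omega
    · intro i
      have hy1 := (hyR i).1
      have hy2 := (hyR i).2
      have hz1 := (hzR i).1
      have hz2 := (hzR i).2
      simp only [Pi.inf_apply, Pi.add_apply, hKdef]
      constructor
      · rcases le_total (y i) (z i + k) with h | h
        · rwa [inf_eq_left.mpr h]
        · rw [inf_eq_right.mpr h]
          exact hconv _ (z i) _ (y i) hz1 hy1 (by omega) (by omega)
      · rcases le_total (y i) (z i + k) with h | h
        · rwa [inf_eq_left.mpr h]
        · rw [inf_eq_right.mpr h]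
          exact hconv _ (z i) _ (y i) hz2 hy2 (by omega) (by omega)
  have hsub2 : S ⊻ Tk ⊆ T'.image (fun z => z + K) := by
    intro u hu
    rw [Finset.mem_sups] at hu
    obtain ⟨y, hyS, w, hwTk, rfl⟩ := hu
    rw [hTk, Finset.mem_image] at hwTk
    obtain ⟨z, hzT, rfl⟩ := hwTk
    rw [hS, Set.Finite.mem_toFinset] at hyS
    rw [hT, Set.Finite.mem_toFinset] at hzT
    obtain ⟨hym, hyb, hyR⟩ := hyS
    obtain ⟨hzm, hzb, hzR⟩ := hzT
    rw [Finset.mem_image]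
    refine ⟨(y - K) ⊔ z, ?_, ?_⟩
    · rw [hT', Set.Finite.mem_toFinset]
      refine ⟨?_, ?_, ?_⟩
      · intro i j hij
        simp only [Pi.sup_apply, Pi.sub_apply, hKdef]
        apply sup_le
        · exact le_trans (by exact sub_le_sub_right (hym hij) k) le_sup_left
        · exact le_trans (hzm hij) le_sup_right
      · intro i
        simp only [Pi.sup_apply, Pi.sub_apply, hKdef, sup_le_iff, le_sup_iff]
        have h1 := (hyb i).1
        have h2 := (hyb i).2
        have h3 := (hzb i).1
        have h4 := (hzb i).2
        constructor
        · left; omega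
        · constructor <;> omega
      · intro i
        have hy1 := (hyR i).1
        have hy2 := (hyR i).2
        have hz1 := (hzR i).1
        have hz2 := (hzR i).2
        simp only [Pi.sup_apply, Pi.sub_apply, hKdef]
        constructor
        · rcases le_total (y i - k) (z i) with h | h
          · rwa [sup_eq_right.mpr h]
          · rw [sup_eq_left.mpr h]
            exact hconv _ (z i) _ (y i) hz1 hy1 (by omega) (by omega)
        · rcases le_total (y i - k) (z i) with h | h
          · rwa [sup_eq_right.mpr h]
          · rw [sup_eq_left.mpr h]
            exact hconv _ (z i) _ (y i) hz2 hy2 (by omega) (by omega)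
    · funext i
      simp only [Pi.add_apply, Pi.sup_apply, Pi.sub_apply, hKdef]
      omega
  have hdk := Finset.le_card_infs_mul_card_sups S Tk
  have hcT : Tk.card = T.card := Finset.card_image_of_injective _ (add_left_injective K)
  have hcT' : (T'.image (fun z => z + K)).card = T'.card :=
    Finset.card_image_of_injective _ (add_left_injective K)
  have hfinal : S.card * T.card ≤ S'.card * T'.card := by
    calc S.card * T.card = S.card * Tk.card := by rw [hcT]
    _ ≤ (S ⊼ Tk).card * (S ⊻ Tk).card := hdk
    _ ≤ S'.card * (T'.image (fun z => z + K)).card :=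
        Nat.mul_le_mul (Finset.card_le_card hsub1) (Finset.card_le_card hsub2)
    _ = S'.card * T'.card := by rw [hcT']
  have hc : ∀ (α' γ' : ℤ), Nat.card (EncSet R m x₀ α' γ') = ((hfin α' γ').toFinset).card := by
    intro α' γ'
    rw [Nat.card_coe_set_eq, Set.ncard_eq_toFinset_card _ (hfin α' γ')]
  rw [hc α γ, hc β δ, hc (α-1) γ, hc (β+1) δ]
  exact hfinal


/-- Lemma 6.2(a): vertical variant of the path-switching inequality in a
staircase region. -/
theorem lattice_path_vertical {a b : ℤ} (lower upper : ℕ → ℤ × ℤ)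
    (hlow : IsNEPath (0, 0) (a, b) lower) (hup : IsNEPath (0, 0) (a, b) upper)
    (R : Set (ℤ × ℤ)) (hR : R = staircaseRegion (steps (0, 0) (a, b)) lower upper)
    (hlR : ∀ t, lower t ∈ R) (huR : ∀ t, upper t ∈ R)
    (A B C D : ℤ × ℤ) (hA : A ∈ R) (hB : B ∈ R) (hC : C ∈ R) (hD : D ∈ R)
    (hABcol : A.1 = B.1) (hABle : B.2 ≤ A.2)
    (hCDcol : C.1 = D.1) (hright : A.1 < C.1) (hCDle : D.2 ≤ C.2)
    (hgap : C.2 - D.2 < A.2 - B.2) :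
    pathCount R A C * pathCount R B D ≤
      pathCount R (A - (0, 1)) C * pathCount R (B + (0, 1)) D := by
  have hconv : ∀ x r s t : ℤ, (x, r) ∈ R → (x, t) ∈ R → r ≤ s → s ≤ t → (x, s) ∈ R := by
    intro x r s t h1 h2 hrs hst
    rw [hR] at h1 h2 ⊢
    obtain ⟨⟨t₁, ht₁, he₁, hl₁⟩, -⟩ := h1
    obtain ⟨-, t₂, ht₂, he₂, hu₂⟩ := h2
    exact ⟨⟨t₁, ht₁, he₁, by simp only [] at hl₁ ⊢; omega⟩,
           ⟨t₂, ht₂, he₂, by simp only [] at hu₂ ⊢; omega⟩⟩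
  rcases lt_or_ge C.2 A.2 with hc | hAC
  · rw [pathCount_eq_zero hc]
    simp
  rcases lt_or_ge D.2 B.2 with hd | hBD
  · rw [pathCount_eq_zero hd]
    simp
  have hBD1 : B.2 + 1 ≤ D.2 := by omega
  set m := (C.1 - A.1).toNat with hmdef
  have hm0 : 0 < m := by omega
  have hmC : C.1 = A.1 + (m : ℤ) := by omega
  have hmD : D.1 = B.1 + (m : ℤ) := by omega
  have hA'eq : A - ((0 : ℤ), (1 : ℤ)) = (A.1, A.2 - 1) := by
    rw [Prod.ext_iff]
    constructor <;> simp
  have hB'eq : B + ((0 : ℤ), (1 : ℤ)) = (B.1, B.2 + 1) := by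
    rw [Prod.ext_iff]
    constructor <;> simp
  have hAmem : (A.1, A.2) ∈ R := by
    have : (A.1, A.2) = A := rfl
    rwa [this]
  have hBmem : (A.1, B.2) ∈ R := by
    have : (A.1, B.2) = B := by
      rw [Prod.ext_iff]
      exact ⟨hABcol, rfl⟩
    rwa [this]
  have hA' : (A.1, A.2 - 1) ∈ R := hconv A.1 B.2 (A.2 - 1) A.2 hBmem hAmem (by omega) (by omega)
  have hB' : (B.1, B.2 + 1) ∈ R := by
    have := hconv A.1 B.2 (B.2 + 1) A.2 hBmem hAmem (by omega) (by omega)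
    have he : (A.1, B.2 + 1) = (B.1, B.2 + 1) := by rw [hABcol]
    rwa [he] at this
  rw [hA'eq, hB'eq]
  rw [count_eq R hconv A C hA hC m hm0 hmC hAC,
      count_eq R hconv B D hB hD m hm0 hmD hBD,
      count_eq R hconv (A.1, A.2 - 1) C hA' hC m hm0 hmC (by simp only []; omega),
      count_eq R hconv (B.1, B.2 + 1) D hB' hD m hm0 hmD (by simp only []; omega)]
  rw [← hABcol]
  exact enc_ineq R hconv m A.1 A.2 B.2 C.2 D.2 (by omega) (by omega)
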